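/- arXiv:2602.15483 — 2 statements merged into one kernel-verified Lean document; each statement's English description precedes it below -/
import Mathlib

section
/- Let V = (Q,T) be a d-VASS with n states and geometric dimension g whose strongly connected components form a chain (the condensation is a directed path with consecutive SCCs connected by a single transition). Then for every configuration p(u) and every sorted vector C = (C_0, C_1, …, C_{g−1}) ∈ ℕ^g (with C_0 ≤ C_1 ≤ … ≤ C_{g−1}), the number of C-thin configurations reachable from p(u) is at most n · d^g · ∏_{i=0}^{g−1} C_i. -/
open Finset


/-- A transition of a `d`-dimensional VASS with state space `Fin n`:
source state, effect vector, target state. -/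
abbrev Transition (n d : ℕ) := Fin n × (Fin d → ℤ) × Fin n

/-- A `d`-VASS with states `Fin n`, given by its finite set of transitions. -/
abbrev VASS (n d : ℕ) := Finset (Transition n d)

/-- A path: a sequence of transitions of `T` in which the target state of each
transition equals the source state of the next. -/
def IsPath {n d : ℕ} (T : VASS n d) (ts : List (Transition n d)) : Prop :=
  (∀ t ∈ ts, t ∈ T) ∧ ts.Chain' (fun t t' => t.2.2 = t'.1)

/-- The effect of a path: the sum of the vectors of its transitions. -/
def effect {n d : ℕ} (ts : List (Transition n d)) : Fin d → ℤ :=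
  (ts.map (fun t => t.2.1)).sum

/-- A cycle: a nonempty path whose first source state equals its last target state. -/
def IsCycle {n d : ℕ} (T : VASS n d) (ts : List (Transition n d)) : Prop :=
  IsPath T ts ∧ ∃ h : ts ≠ [], (ts.getLast h).2.2 = (ts.head h).1

/-- Embedding of integer vectors into rational vectors. -/
def toQ {d : ℕ} (v : Fin d → ℤ) : Fin d → ℚ := fun i => (v i : ℚ)

/-- The cycle space of a VASS: the ℚ-vector space spanned by the effects of all cycles. -/
def cycleSpace {n d : ℕ} (T : VASS n d) : Submodule ℚ (Fin d → ℚ) :=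
  Submodule.span ℚ { x | ∃ ts, IsCycle T ts ∧ x = toQ (effect ts) }

/-- The geometric dimension of a VASS: the dimension of its cycle space. -/
noncomputable def geomDim {n d : ℕ} (T : VASS n d) : ℕ :=
  Module.finrank ℚ (cycleSpace T)


/-- A configuration: a state together with nonnegative counter values. -/
abbrev Config (n d : ℕ) := Fin n × (Fin d → ℕ)

/-- One step of a VASS between configurations. -/
def Step {n d : ℕ} (T : VASS n d) (c c' : Config n d) : Prop :=
  ∃ a : Fin d → ℤ, (c.1, a, c'.1) ∈ T ∧ ∀ i, (c'.2 i : ℤ) = (c.2 i : ℤ) + a i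

/-- A run from `c` visiting the configurations `cs` (in order); its length is `cs.length`. -/
def IsRunFrom {n d : ℕ} (T : VASS n d) (c : Config n d) (cs : List (Config n d)) : Prop :=
  List.Chain (Step T) c cs

/-- The final configuration of a run from `c` through `cs`. -/
def runEnd {n d : ℕ} (c : Config n d) (cs : List (Config n d)) : Config n d :=
  (c :: cs).getLast (List.cons_ne_nil _ _)

/-- Reachability between configurations. -/
def Reachable {n d : ℕ} (T : VASS n d) (c c' : Config n d) : Prop :=
  ∃ cs, IsRunFrom T c cs ∧ runEnd c cs = c'


/-- Edge relation on states induced by the transitions. -/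
def StateEdge {n d : ℕ} (T : VASS n d) (p q : Fin n) : Prop := ∃ a, (p, a, q) ∈ T

/-- Reachability between states along transitions. -/
def StateReach {n d : ℕ} (T : VASS n d) : Fin n → Fin n → Prop :=
  Relation.ReflTransGen (StateEdge T)

/-- The strongly connected components of the VASS form a chain: there is a `level`
function whose classes are exactly the SCCs, transitions stay in a level or move to
the next one, consecutive levels are connected by exactly one transition, and the
occupied levels form an initial segment of ℕ. -/
def SCCChain {n d : ℕ} (T : VASS n d) : Prop :=
  ∃ level : Fin n → ℕ,
    (∀ p q, (StateReach T p q ∧ StateReach T q p) ↔ level p = level q) ∧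
    (∀ t ∈ T, level t.2.2 = level t.1 ∨ level t.2.2 = level t.1 + 1) ∧
    (∀ ℓ : ℕ, (∃ p, level p = ℓ + 1) →
      ∃! t, t ∈ T ∧ level t.1 = ℓ ∧ level t.2.2 = ℓ + 1) ∧
    (∀ p : Fin n, ∀ k ≤ level p, ∃ q, level q = k)


/-- A clean basis of a subspace `U ⊆ ℚ^d`: a basis `b 1, …, b g` together with
injectively chosen distinguished coordinates `K 1, …, K g` on which the basis
vectors form the `g × g` identity matrix. -/
def IsCleanBasis {d g : ℕ} (U : Submodule ℚ (Fin d → ℚ)) (b : Fin g → (Fin d → ℚ))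
    (K : Fin g → Fin d) : Prop :=
  LinearIndependent ℚ b ∧ Submodule.span ℚ (Set.range b) = U ∧
  Function.Injective K ∧ ∀ i j, b i (K j) = if i = j then 1 else 0


/-- `w ∈ ℕ^g` is `C`-bounded (for sorted `C`): for every `k ∈ {1,…,g}`, the number of
indices `i` with `w i ≥ C (g − k)` is strictly less than `k`. Here `k.rev = g − 1 − k`
plays the role of `g − (k+1)`. -/
def CBounded {g : ℕ} (C : Fin g → ℕ) (w : Fin g → ℕ) : Prop :=
  ∀ k : Fin g, (Finset.univ.filter (fun i => C k.rev ≤ w i)).card < (k : ℕ) + 1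

/-- A vector `v ∈ ℕ^d` is `C`-thin with respect to `U` if some clean basis of `U`
has a `C`-bounded projection of `v` to the distinguished coordinates. -/
def CThin {d : ℕ} (g : ℕ) (U : Submodule ℚ (Fin d → ℚ)) (C : Fin g → ℕ)
    (v : Fin d → ℕ) : Prop :=
  ∃ (b : Fin g → (Fin d → ℚ)) (K : Fin g → Fin d),
    IsCleanBasis U b K ∧ CBounded C (fun j => v (K j))

section AuxPath
variable {n d : ℕ}

inductive PathE (T : VASS n d) : Fin n → Fin n → (Fin d → ℤ) → Prop
  | nil (a : Fin n) : PathE T a a 0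
  | cons {a b c : Fin n} {v e : Fin d → ℤ} :
      (a, v, b) ∈ T → PathE T b c e → PathE T a c (v + e)

lemma PathE.trans {T : VASS n d} {a b c : Fin n} {e f : Fin d → ℤ}
    (h1 : PathE T a b e) (h2 : PathE T b c f) : PathE T a c (e + f) := by
  induction h1 with
  | nil a => simpa using h2
  | cons ht _ ih =>
    rw [add_assoc]
    exact PathE.cons ht (ih h2)

lemma toQ_add (x y : Fin d → ℤ) : toQ (x + y) = toQ x + toQ y := by
  funext i; simp [toQ]

lemma effect_cons (t : Transition n d) (ts : List (Transition n d)) :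
    effect (t :: ts) = t.2.1 + effect ts := by
  simp [effect]

lemma PathE.exists_list {T : VASS n d} {a b : Fin n} {e : Fin d → ℤ} (h : PathE T a b e) :
    ∃ ts : List (Transition n d), IsPath T ts ∧ effect ts = e ∧
      ((ts = [] ∧ a = b) ∨
        ∃ hne : ts ≠ [], (ts.head hne).1 = a ∧ (ts.getLast hne).2.2 = b) := by
  induction h with
  | nil a => exact ⟨[], ⟨by simp, List.isChain_nil⟩, rfl, Or.inl ⟨rfl, rfl⟩⟩
  | @cons a b c v e ht hp ih =>
    obtain ⟨ts, ⟨hmem, hch⟩, heff, hend⟩ := ih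
    rcases hend with ⟨hnil, hbc⟩ | ⟨hne, hhead, hlast⟩
    · subst hnil; subst hbc
      refine ⟨[(a, v, b)], ⟨by simpa using ht, List.isChain_singleton _⟩, ?_, Or.inr ⟨by simp, rfl, rfl⟩⟩
      have : e = 0 := heff.symm
      subst this
      simp [effect]
    · refine ⟨(a, v, b) :: ts, ⟨?_, ?_⟩, ?_, Or.inr ⟨by simp, rfl, ?_⟩⟩
      · intro t ht'
        rcases List.mem_cons.mp ht' with rfl | h'
        · exact ht
        · exact hmem t h'
      · rw [List.Chain', List.isChain_cons]
        refine ⟨?_, hch⟩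
        intro y hy
        rw [List.head?_eq_head hne] at hy
        simp at hy
        rw [hy] at hhead
        exact hhead.symm
      · rw [effect_cons, heff]
      · rw [List.getLast_cons hne]
        exact hlast
end AuxPath

section AuxPath2
variable {n d : ℕ}

lemma pathE_cycle_mem {T : VASS n d} {a : Fin n} {e : Fin d → ℤ} (h : PathE T a a e) :
    toQ e ∈ cycleSpace T := by
  obtain ⟨ts, hpath, heff, hend⟩ := h.exists_list
  rcases hend with ⟨rfl, -⟩ | ⟨hne, hh, hl⟩
  · have he : e = 0 := heff.symm
    subst he
    have : toQ (0 : Fin d → ℤ) = 0 := by funext i; simp [toQ]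
    rw [this]
    exact zero_mem _
  · subst heff
    exact Submodule.subset_span ⟨ts, ⟨hpath, hne, hl.trans hh.symm⟩, rfl⟩


lemma stateReach_pathE {T : VASS n d} {a b : Fin n} (h : StateReach T a b) :
    ∃ e, PathE T a b e := by
  induction h with
  | refl => exact ⟨0, PathE.nil a⟩
  | tail _ he ih =>
    obtain ⟨e, hp⟩ := ih
    obtain ⟨v, hv⟩ := he
    exact ⟨e + (v + 0), hp.trans (PathE.cons hv (PathE.nil _))⟩

lemma pathE_level_le {T : VASS n d} {level : Fin n → ℕ}
    (hlv : ∀ t ∈ T, level t.2.2 = level t.1 ∨ level t.2.2 = level t.1 + 1)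
    {a b : Fin n} {e : Fin d → ℤ} (h : PathE T a b e) : level a ≤ level b := by
  induction h with
  | nil => exact le_refl _
  | cons ht _ ih =>
    have := hlv _ ht
    simp only at this
    omega

lemma pathE_decompose {T : VASS n d} {level : Fin n → ℕ}
    (hlv : ∀ t ∈ T, level t.2.2 = level t.1 ∨ level t.2.2 = level t.1 + 1)
    {t0 : Transition n d} (ht0 : t0 ∈ T) {b : Fin n}
    (h1 : level t0.1 + 1 = level b) (h2 : level t0.2.2 = level b)
    (huniq : ∀ t' ∈ T, level t'.1 + 1 = level b → level t'.2.2 = level b → t' = t0)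
    {a : Fin n} {e : Fin d → ℤ} (h : PathE T a b e) (hab : level a < level b) :
    ∃ e1 e2, PathE T a t0.1 e1 ∧ PathE T t0.2.2 b e2 ∧ e = e1 + t0.2.1 + e2 := by
  induction h with
  | nil a => omega
  | @cons a x c v e ht hp ih =>
    have hx : level x ≤ level c := pathE_level_le hlv hp
    by_cases hcase : level x < level c
    · obtain ⟨e1, e2, p1, p2, heq⟩ := ih h1 h2 huniq hcase
      exact ⟨v + e1, e2, PathE.cons ht p1, p2, by rw [heq]; abel⟩
    · have hxb : level x = level c := le_antisymm hx (not_lt.mp hcase)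
      have hor : level x = level a ∨ level x = level a + 1 := hlv (a, v, x) ht
      have ht' : (a, v, x) = t0 := huniq _ ht (show level a + 1 = level c by omega) (show level x = level c from hxb)
      refine ⟨0, e, ?_, ?_, ?_⟩
      · rw [← ht']; exact PathE.nil a
      · rw [← ht']; exact hp
      · rw [← ht']; simp

lemma effect_unique_eq {T : VASS n d} {level : Fin n → ℕ}
    (hscc : ∀ p q, (StateReach T p q ∧ StateReach T q p) ↔ level p = level q)
    {a b : Fin n} {e1 e2 : Fin d → ℤ} (heq : level a = level b)
    (h1 : PathE T a b e1) (h2 : PathE T a b e2) :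
    toQ e1 - toQ e2 ∈ cycleSpace T := by
  have hr : StateReach T b a := ((hscc b a).mpr heq.symm).1
  obtain ⟨f, hf⟩ := stateReach_pathE hr
  have c1 := pathE_cycle_mem (h1.trans hf)
  have c2 := pathE_cycle_mem (h2.trans hf)
  have hmem := sub_mem c1 c2
  have : toQ (e1 + f) - toQ (e2 + f) = toQ e1 - toQ e2 := by
    rw [toQ_add, toQ_add]; abel
  rwa [this] at hmem

lemma effect_unique_aux {T : VASS n d} {level : Fin n → ℕ}
    (hscc : ∀ p q, (StateReach T p q ∧ StateReach T q p) ↔ level p = level q)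
    (hlv : ∀ t ∈ T, level t.2.2 = level t.1 ∨ level t.2.2 = level t.1 + 1)
    (hbr : ∀ ℓ : ℕ, (∃ p, level p = ℓ + 1) →
      ∃! t, t ∈ T ∧ level t.1 = ℓ ∧ level t.2.2 = ℓ + 1) :
    ∀ m (a b : Fin n) (e1 e2 : Fin d → ℤ), level b ≤ level a + m →
      PathE T a b e1 → PathE T a b e2 → toQ e1 - toQ e2 ∈ cycleSpace T := by
  intro m
  induction m with
  | zero =>
    intro a b e1 e2 hm h1 h2
    exact effect_unique_eq hscc (le_antisymm (pathE_level_le hlv h1) (by omega)) h1 h2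
  | succ m ih =>
    intro a b e1 e2 hm h1 h2
    by_cases heq : level a = level b
    · exact effect_unique_eq hscc heq h1 h2
    · have hlt : level a < level b := lt_of_le_of_ne (pathE_level_le hlv h1) heq
      obtain ⟨t0, ⟨ht0T, ht0a, ht0b⟩, huq⟩ := hbr (level b - 1) ⟨b, by omega⟩
      have huniq : ∀ t' ∈ T, level t'.1 + 1 = level b → level t'.2.2 = level b → t' = t0 := by
        intro t' htT' hA hB
        exact huq t' ⟨htT', by omega, by omega⟩
      obtain ⟨e11, e12, p11, p12, he1⟩ :=
        pathE_decompose hlv ht0T (by omega) (by omega) huniq h1 hlt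
      obtain ⟨e21, e22, p21, p22, he2⟩ :=
        pathE_decompose hlv ht0T (by omega) (by omega) huniq h2 hlt
      have d1 := ih a t0.1 e11 e21 (by omega) p11 p21
      have d2 := ih t0.2.2 b e12 e22 (by omega) p12 p22
      have hmem := add_mem d1 d2
      have : (toQ e11 - toQ e21) + (toQ e12 - toQ e22) = toQ e1 - toQ e2 := by
        rw [he1, he2, toQ_add, toQ_add, toQ_add, toQ_add]; abel
      rwa [this] at hmem
end AuxPath2


section AuxCount

lemma cbounded_sort {g : ℕ} {C w : Fin g → ℕ} (h : CBounded C w) :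
    ∃ σ : Equiv.Perm (Fin g), ∀ i, w (σ i) < C i := by
  refine ⟨Tuple.sort w, fun i => ?_⟩
  by_contra hx
  push_neg at hx
  have hmono := Tuple.monotone_sort w
  have hk := h i.rev
  rw [Fin.rev_rev] at hk
  have hcard : (Finset.Ici i).card ≤
      (Finset.univ.filter (fun ℓ => C i ≤ w ℓ)).card := by
    apply Finset.card_le_card_of_injOn (fun j => Tuple.sort w j)
    · intro j hj
      simp only [Finset.mem_coe, Finset.mem_filter, Finset.mem_univ, true_and]
      exact le_trans hx (hmono (Finset.mem_Ici.mp hj))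
    · intro x _ y _ hxy
      exact (Tuple.sort w).injective hxy
  rw [Fin.card_Ici] at hcard
  have hrev : (i.rev : ℕ) = g - (i + 1) := Fin.val_rev i
  have hig : (i : ℕ) < g := i.isLt
  omega

lemma thin_norm {d g : ℕ} {U : Submodule ℚ (Fin d → ℚ)} {C : Fin g → ℕ} {v : Fin d → ℕ}
    (h : CThin g U C v) :
    ∃ K : Fin g → Fin d, (∃ b, IsCleanBasis U b K) ∧ ∀ i, v (K i) < C i := by
  obtain ⟨b, K, ⟨hli, hsp, hKi, hbK⟩, hcb⟩ := h
  obtain ⟨σ, hσ⟩ := cbounded_sort hcb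
  refine ⟨K ∘ σ, ⟨b ∘ σ, ?_, ?_, ?_, ?_⟩, hσ⟩
  · exact hli.comp σ σ.injective
  · rw [Set.range_comp, σ.surjective.range_eq, Set.image_univ]; exact hsp
  · exact hKi.comp σ.injective
  · intro i j
    simp only [Function.comp_apply]
    rw [hbK]
    simp [EmbeddingLike.apply_eq_iff_eq]

lemma clean_eq {d g : ℕ} {U : Submodule ℚ (Fin d → ℚ)} {b : Fin g → Fin d → ℚ}
    {K : Fin g → Fin d} (hcb : IsCleanBasis U b K) {x : Fin d → ℚ}
    (hx : x ∈ U) (hz : ∀ j, x (K j) = 0) : x = 0 := by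
  obtain ⟨hli, hsp, hKi, hbK⟩ := hcb
  rw [← hsp] at hx
  obtain ⟨c, hc⟩ := Submodule.mem_span_range_iff_exists_fun ℚ |>.mp hx
  have hcz : ∀ j, c j = 0 := by
    intro j
    have := hz j
    rw [← hc] at this
    rw [Finset.sum_apply] at this
    simp only [Pi.smul_apply, smul_eq_mul, hbK, mul_ite, mul_one, mul_zero] at this
    rwa [Finset.sum_ite_eq' Finset.univ j c, if_pos (Finset.mem_univ j)] at this
  rw [← hc]
  simp [hcz]

end AuxCount


lemma run_pathE {n d : ℕ} {T : VASS n d} :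
    ∀ (cs : List (Config n d)) (c : Config n d), IsRunFrom T c cs →
      ∃ e, PathE T c.1 (runEnd c cs).1 e ∧
        ∀ i, ((runEnd c cs).2 i : ℤ) = (c.2 i : ℤ) + e i := by
  intro cs
  induction cs with
  | nil =>
    intro c _
    have hend : runEnd c [] = c := rfl
    rw [hend]
    exact ⟨0, PathE.nil _, fun i => by simp⟩
  | cons c' cs ih =>
    intro c hrun
    rw [IsRunFrom, List.Chain, List.isChain_cons_cons] at hrun
    obtain ⟨⟨a, haT, hval⟩, hchain⟩ := hrun
    obtain ⟨e, hp, hv⟩ := ih c' hchain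
    have hend : runEnd c (c' :: cs) = runEnd c' cs := by
      simp [runEnd, List.getLast_cons]
    rw [hend]
    refine ⟨a + e, PathE.cons haT hp, fun i => ?_⟩
    have h1 := hv i
    have h2 := hval i
    simp only [Pi.add_apply]
    omega

open Classical in
noncomputable def thinKey {n d g : ℕ} (U : Submodule ℚ (Fin d → ℚ)) (C : Fin g → ℕ)
    (K0 : Fin g → Fin d) (c : Config n d) : Fin n × (Fin g → Fin d) × (Fin g → ℕ) :=
  if h : CThin g U C c.2 then
    (c.1, (thin_norm h).choose, fun i => c.2 ((thin_norm h).choose i))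
  else (c.1, K0, fun _ => 0)


/-- In a VASS with n states and geometric dimension g whose SCCs form a chain,
for any configuration p(u) and any sorted C ∈ ℕ^g, the set of C-thin configurations
reachable from p(u) is finite of cardinality at most n·d^g·∏ C_i. -/
theorem card_thin_reachable_le {n d g : ℕ} (T : VASS n d)
    (hchain : SCCChain T) (hg : geomDim T = g)
    (p : Fin n) (u : Fin d → ℕ) (C : Fin g → ℕ) (hsorted : Monotone C) :
    {c : Config n d | Reachable T (p, u) c ∧ CThin g (cycleSpace T) C c.2}.Finite ∧
    {c : Config n d | Reachable T (p, u) c ∧ CThin g (cycleSpace T) C c.2}.ncard ≤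
      n * d ^ g * ∏ i, C i := by
  classical
  obtain ⟨level, hscc, hlv, hbr, -⟩ := hchain
  set U := cycleSpace T with hU
  set S := {c : Config n d | Reachable T (p, u) c ∧ CThin g U C c.2} with hSdef
  rcases Set.eq_empty_or_nonempty S with hemp | ⟨c0, hc0⟩
  · rw [hemp]; exact ⟨Set.finite_empty, by simp⟩
  have hthin0 : CThin g U C c0.2 := hc0.2
  set K0 : Fin g → Fin d := (thin_norm hthin0).choose with hK0
  set f := thinKey (n := n) U C K0 with hf
  have hreach : ∀ c ∈ S, ∃ e, PathE T p c.1 e ∧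
      ∀ i, (c.2 i : ℤ) = (u i : ℤ) + e i := by
    intro c hc
    obtain ⟨cs, hrun, hend⟩ := hc.1
    obtain ⟨e, hp, hv⟩ := run_pathE cs (p, u) hrun
    rw [hend] at hp hv
    exact ⟨e, hp, hv⟩
  have hinj : Set.InjOn f S := by
    intro c hcS c' hc'S hfeq
    have h1 : CThin g U C c.2 := hcS.2
    have h2 : CThin g U C c'.2 := hc'S.2
    rw [hf] at hfeq
    unfold thinKey at hfeq
    rw [dif_pos h1, dif_pos h2] at hfeq
    have hq : c.1 = c'.1 := congrArg (fun x => x.1) hfeq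
    have hK : (thin_norm h1).choose = (thin_norm h2).choose :=
      congrArg (fun x => x.2.1) hfeq
    have hw : (fun i => c.2 ((thin_norm h1).choose i)) =
        (fun i => c'.2 ((thin_norm h2).choose i)) := congrArg (fun x => x.2.2) hfeq
    obtain ⟨b, hb⟩ := (thin_norm h1).choose_spec.1
    obtain ⟨e, hp, hv⟩ := hreach c hcS
    obtain ⟨e', hp', hv'⟩ := hreach c' hc'S
    rw [← hq] at hp'
    have hxU : toQ e - toQ e' ∈ U :=
      effect_unique_aux hscc hlv hbr (level c.1) p c.1 e e' (by omega) hp hp'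
    have hxeq : (fun i => ((c.2 i : ℚ)) - ((c'.2 i : ℚ))) = toQ e - toQ e' := by
      funext i
      have ha := hv i
      have hb' := hv' i
      have : (c.2 i : ℤ) - (c'.2 i : ℤ) = e i - e' i := by omega
      simp only [toQ, Pi.sub_apply]
      exact_mod_cast this
    have hz : ∀ j, (fun i => ((c.2 i : ℚ)) - ((c'.2 i : ℚ)))
        ((thin_norm h1).choose j) = 0 := by
      intro j
      have hcc : c.2 ((thin_norm h1).choose j) = c'.2 ((thin_norm h1).choose j) := by
        have := congrFun hw j
        rwa [← hK] at this
      simp only [hcc, sub_self]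
    have hx0 := clean_eq hb (x := fun i => ((c.2 i : ℚ)) - ((c'.2 i : ℚ))) (by rw [hxeq]; exact hxU) hz
    have hv2 : c.2 = c'.2 := by
      funext i
      have := congrFun hx0 i
      simp only [Pi.zero_apply, sub_eq_zero] at this
      exact_mod_cast this
    exact Prod.ext_iff.mpr ⟨hq, hv2⟩
  set B : Finset (Fin n × (Fin g → Fin d) × (Fin g → ℕ)) :=
    Finset.univ ×ˢ Finset.univ ×ˢ Fintype.piFinset (fun i => Finset.range (C i)) with hB
  have himg : f '' S ⊆ ↑B := by
    rintro x ⟨c, hc, rfl⟩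
    have h1 : CThin g U C c.2 := hc.2
    rw [hf]
    unfold thinKey
    rw [dif_pos h1]
    refine Finset.mem_coe.mpr ?_
    simp only [hB, Finset.mem_product, Finset.mem_univ, true_and,
      Fintype.mem_piFinset, Finset.mem_range]
    exact fun i => (thin_norm h1).choose_spec.2 i
  have hfin : S.Finite := Set.Finite.of_finite_image (B.finite_toSet.subset himg) hinj
  refine ⟨hfin, ?_⟩
  have h1 : S.ncard = (f '' S).ncard := (Set.ncard_image_of_injOn hinj).symm
  have h2 : (f '' S).ncard ≤ B.card := by
    rw [← Set.ncard_coe_finset]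
    exact Set.ncard_le_ncard himg B.finite_toSet
  have h3 : B.card = n * (d ^ g * ∏ i, C i) := by
    simp [hB, Finset.card_product, Fintype.card_piFinset, Finset.card_range,
      Fintype.card_fun]
  rw [h1]
  rw [Nat.mul_assoc]
  omega
end

section
/- Let V = (Q,T) be a d-VASS with n states, maximal transition norm M, and geometric dimension g, and define K_0 = n − 1 and K_i = n·d^i·∏_{j=0}^{i−1}(‖y‖_∞ + M·K_j) + K_{i−1} for i ≥ 1. If there is a run in V from configuration s(x) that covers t(y), then there is a run from s(x) that covers t(y) of length at most K_g. -/
open Finset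


/-- Max-norm of an integer vector. -/
def intNorm {d : ℕ} (a : Fin d → ℤ) : ℕ := Finset.univ.sup (fun i => (a i).natAbs)

/-- The maximal transition norm of a VASS. -/
def vassNorm {n d : ℕ} (T : VASS n d) : ℕ := T.sup (fun t => intNorm t.2.1)

/-- Max-norm of a vector of naturals. -/
def natNorm {d : ℕ} (y : Fin d → ℕ) : ℕ := Finset.univ.sup y

-- ===== auxiliary development =====

abbrev Cfg (n d : ℕ) := Fin n × (Fin d → ℤ)

/-- Integer-valued step. -/
def StepZ {n d : ℕ} (T : VASS n d) (c c' : Cfg n d) : Prop :=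
  ∃ a, (c.1, a, c'.1) ∈ T ∧ ∀ k, c'.2 k = c.2 k + a k

def OKon {n d : ℕ} (A : Finset (Fin d)) (c : Cfg n d) : Prop := ∀ k ∈ A, 0 ≤ c.2 k

/-- A covering run (list of configurations, incl. the start) w.r.t. active coordinates `A`. -/
def CovRun {n d : ℕ} (T : VASS n d) (tf : Fin n) (y : Fin d → ℕ)
    (A : Finset (Fin d)) (c0 : Cfg n d) (L : List (Cfg n d)) : Prop :=
  L.Chain' (StepZ T) ∧ L.head? = some c0 ∧ (∀ c ∈ L, OKon A c) ∧
  (L.getLastD c0).1 = tf ∧ ∀ k ∈ A, (y k : ℤ) ≤ (L.getLastD c0).2 k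

section ListAux
variable {α : Type*}

lemma getLast?_take_succ (L : List α) (t : ℕ) (h : t < L.length) :
    (L.take (t + 1)).getLast? = some (L[t]) := by
  have h2 : L.take (t+1) = L.take t ++ [L[t]] := by
    rw [List.take_succ, List.getElem?_eq_getElem h]
    rfl
  rw [h2, List.getLast?_concat]

lemma getLast?_drop_of_lt (L : List α) (m : ℕ) (h : m < L.length) :
    (L.drop m).getLast? = L.getLast? := by
  rw [List.getLast?_eq_getElem?, List.getLast?_eq_getElem?, List.length_drop]
  rw [List.getElem?_drop]
  congr 1
  omega

lemma chain'_getElem {R : α → α → Prop} {L : List α} (hC : L.Chain' R) (i : ℕ)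
    (h : i + 1 < L.length) : R (L[i]'(by omega)) (L[i+1]'h) := by
  have := List.isChain_iff_getElem.mp hC i (by omega)
  simpa using this

end ListAux

section RunAux
variable {n d : ℕ} {T : VASS n d} {M : ℕ}

lemma trans_coord_bound (hM : vassNorm T = M) {q q' : Fin n} {a : Fin d → ℤ}
    (hT : (q, a, q') ∈ T) (k : Fin d) : -(M:ℤ) ≤ a k ∧ a k ≤ M := by
  have h1 : intNorm a ≤ M := by
    rw [← hM]
    exact Finset.le_sup (f := fun t : Transition n d => intNorm t.2.1) hT
  have h2 : (a k).natAbs ≤ intNorm a :=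
    Finset.le_sup (f := fun i => (a i).natAbs) (Finset.mem_univ k)
  have h3 : (a k).natAbs ≤ M := le_trans h2 h1
  have h4 : |a k| ≤ (M:ℤ) := by
    rw [Int.abs_eq_natAbs]
    exact_mod_cast h3
  exact ⟨neg_le_of_abs_le h4, le_of_abs_le h4⟩

lemma run_lower_bound (hM : vassNorm T = M) :
    ∀ (l : List (Cfg n d)) (e : Cfg n d), (e :: l).Chain' (StepZ T) →
      ∀ c ∈ l, ∀ k, e.2 k - (M:ℤ) * l.length ≤ c.2 k := by
  intro l
  induction l with
  | nil => intro e _ c hc; simp at hc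
  | cons f l' ih =>
    intro e hch c hc k
    have hstep : StepZ T e f := (List.isChain_cons_cons.mp hch).1
    have hch' : (f :: l').Chain' (StepZ T) := (List.isChain_cons_cons.mp hch).2
    obtain ⟨a, haT, hav⟩ := hstep
    have hak := trans_coord_bound hM haT k
    have hef : e.2 k - M ≤ f.2 k := by
      rw [hav k]; linarith [hak.1]
    rcases List.mem_cons.mp hc with hc | hc
    · rw [hc]
      have hMn : (0:ℤ) ≤ (M:ℤ) * l'.length := by positivity
      simp only [List.length_cons]
      push_cast
      linarith
    · have := ih f hch' c hc k
      simp only [List.length_cons]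
      push_cast
      linarith

/-- Shifting values by a constant vector preserves integer steps. -/
def shiftC {n d : ℕ} (w : Fin d → ℤ) (c : Cfg n d) : Cfg n d := (c.1, fun k => c.2 k + w k)

lemma stepZ_shift {w : Fin d → ℤ} {c c' : Cfg n d} (h : StepZ T c c') :
    StepZ T (shiftC w c) (shiftC w c') := by
  obtain ⟨a, haT, hav⟩ := h
  exact ⟨a, haT, fun k => by simp [shiftC, hav k]; ring⟩

lemma effect_append (l1 l2 : List (Transition n d)) :
    effect (l1 ++ l2) = effect l1 + effect l2 := by
  unfold effect
  rw [List.map_append, List.sum_append]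

lemma effect_single (tr : Transition n d) : effect [tr] = tr.2.1 := by
  unfold effect
  simp

/-- Extract the transition path underlying a segment of a chain of integer steps. -/
lemma exists_path_segment (L : List (Cfg n d)) (hC : L.Chain' (StepZ T))
    (t1 : ℕ) (h1 : t1 < L.length) : ∀ t2, t1 ≤ t2 → ∀ h2 : t2 < L.length,
    ∃ ts : List (Transition n d), IsPath T ts ∧ ts.length = t2 - t1 ∧
      (∀ k, (L[t2]'h2).2 k = (L[t1]'h1).2 k + effect ts k) ∧
      (∀ u ∈ ts.head?, u.1 = (L[t1]'h1).1) ∧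
      (∀ u ∈ ts.getLast?, u.2.2 = (L[t2]'h2).1) := by
  intro t2 h12
  induction t2, h12 using Nat.le_induction with
  | base =>
    intro h2
    refine ⟨[], ⟨by simp, List.IsChain.nil⟩, by simp, ?_, by simp, by simp⟩
    intro k
    simp [effect]
  | succ m h1m ih =>
    intro h2
    have hm : m < L.length := by omega
    obtain ⟨ts, hpath, hlen, hval, hhead, hlast⟩ := ih hm
    have hstep := chain'_getElem hC m h2
    obtain ⟨a, haT, hav⟩ := hstep
    refine ⟨ts ++ [(L[m].1, a, (L[m+1]'h2).1)], ⟨?_, ?_⟩, ?_, ?_, ?_, ?_⟩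
    · intro u hu
      rcases List.mem_append.mp hu with hu | hu
      · exact hpath.1 u hu
      · simp at hu; subst hu; exact haT
    · refine List.isChain_append.mpr ?_
      refine ⟨hpath.2, by simp, ?_⟩
      intro u hu v hv
      simp at hv
      subst hv
      exact hlast u hu
    · simp [hlen]; omega
    · intro k
      rw [effect_append, Pi.add_apply, effect_single]
      have := hav k
      rw [this, hval k]
      ring
    · intro u hu
      rcases hts : ts with _ | ⟨t0, tsr⟩
      · subst hts
        simp at hu
        subst hu
        have : m = t1 := by simp at hlen; omega
        subst this
        rfl
      · rw [hts, List.cons_append, List.head?_cons] at hu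
        simp only [Option.mem_def, Option.some.injEq] at hu
        subst hu
        apply hhead
        rw [hts]
        simp
    · intro u hu
      rw [List.getLast?_concat] at hu
      simp only [Option.mem_def, Option.some.injEq] at hu
      subst hu
      rfl

end RunAux

section CycleAux
variable {n d : ℕ} {T : VASS n d}

lemma diff_mem_cycleSpace {L : List (Cfg n d)} (hC : L.Chain' (StepZ T))
    {t1 t2 : ℕ} (h12 : t1 < t2) (h2 : t2 < L.length)
    (hst : (L[t1]'(lt_trans h12 h2)).1 = (L[t2]'h2).1) :
    toQ (fun k => (L[t2]'h2).2 k - (L[t1]'(lt_trans h12 h2)).2 k) ∈ cycleSpace T := by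
  have h1 : t1 < L.length := lt_trans h12 h2
  obtain ⟨ts, hpath, hlen, hval, hhead, hlast⟩ :=
    exists_path_segment L hC t1 h1 t2 (le_of_lt h12) h2
  have hne : ts ≠ [] := by
    intro h
    rw [h] at hlen
    simp at hlen
    omega
  have hcyc : IsCycle T ts := by
    refine ⟨hpath, hne, ?_⟩
    have hh := hhead (ts.head hne) (by rw [List.head?_eq_head hne]; rfl)
    have hl := hlast (ts.getLast hne) (by rw [List.getLast?_eq_getLast hne]; rfl)
    rw [hl, hh, hst]
  apply Submodule.subset_span
  refine ⟨ts, hcyc, ?_⟩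
  funext k
  simp only [toQ]
  congr 1
  have := hval k
  omega

end CycleAux

section LinAlg
variable {n d : ℕ} (T : VASS n d)

/-- The coordinate functionals restricted to the cycle space. -/
noncomputable def ell (k : Fin d) : (cycleSpace T) →ₗ[ℚ] ℚ :=
  (LinearMap.proj k).comp (Submodule.subtype _)

/-- Span of the coordinate functionals of `A` on the cycle space. -/
noncomputable def psiSp (A : Finset (Fin d)) :
    Submodule ℚ ((cycleSpace T) →ₗ[ℚ] ℚ) :=
  Submodule.span ℚ (ell T '' ↑A)

lemma psi_mono {A B : Finset (Fin d)} (h : A ⊆ B) : psiSp T A ≤ psiSp T B :=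
  Submodule.span_mono (Set.image_mono h)

lemma finrank_psi_univ_le : Module.finrank ℚ (psiSp T Finset.univ) ≤ geomDim T := by
  have h1 : Module.finrank ℚ (psiSp T Finset.univ) ≤
      Module.finrank ℚ ((cycleSpace T) →ₗ[ℚ] ℚ) := Submodule.finrank_le _
  have h2 : Module.finrank ℚ ((cycleSpace T) →ₗ[ℚ] ℚ) =
      Module.finrank ℚ (cycleSpace T) := Subspace.dual_finrank_eq
  rw [geomDim]
  omega

lemma eval_zero_of_mem_span {δv : cycleSpace T} {s : Set ((cycleSpace T) →ₗ[ℚ] ℚ)}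
    (hs : ∀ φ ∈ s, φ δv = 0) {φ} (hφ : φ ∈ Submodule.span ℚ s) : φ δv = 0 := by
  induction hφ using Submodule.span_induction with
  | mem x hx => exact hs x hx
  | zero => simp
  | add x y _ _ hx hy => simp [hx, hy]
  | smul a x _ hx => simp [hx]

/-- Greedy choice of coordinates exhausting the span of the `A`-functionals. -/
lemma greedy (i : ℕ) (A : Finset (Fin d)) (Z : ℕ → Finset (Fin d))
    (hZA : ∀ j < i, Z j ⊆ A)
    (hrk : ∀ j < i, j + 1 ≤ Module.finrank ℚ (psiSp T (Z j)))
    (hA : Module.finrank ℚ (psiSp T A) ≤ i) :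
    ∃ c : Fin i → Fin d, (∀ j : Fin i, c j ∈ Z j) ∧
      psiSp T A ≤ Submodule.span ℚ (ell T '' Set.range c) := by
  have claim : ∀ m, m ≤ i → ∃ c : Fin m → Fin d, (∀ j : Fin m, c j ∈ Z j) ∧
      Module.finrank ℚ (Submodule.span ℚ (ell T '' Set.range c)) = m := by
    intro m
    induction m with
    | zero =>
      intro _
      refine ⟨Fin.elim0, fun j => j.elim0, ?_⟩
      rw [Set.range_eq_empty, Set.image_empty, Submodule.span_empty, finrank_bot]
    | succ m ihm =>
      intro hmi
      obtain ⟨c, hcZ, hcrk⟩ := ihm (by omega)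
      set S := Submodule.span ℚ (ell T '' Set.range c) with hS
      have hstep : ∃ k ∈ Z m, ell T k ∉ S := by
        by_contra hcon
        push_neg at hcon
        have hle : psiSp T (Z m) ≤ S := by
          rw [psiSp, Submodule.span_le]
          rintro x ⟨k, hk, rfl⟩
          exact hcon k (by exact_mod_cast hk)
        have := le_trans (hrk m (by omega)) (Submodule.finrank_mono hle)
        omega
      obtain ⟨k, hkZ, hknS⟩ := hstep
      refine ⟨Fin.snoc c k, ?_, ?_⟩
      · intro j
        refine Fin.lastCases ?_ ?_ j
        · rw [Fin.snoc_last]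
          exact hkZ
        · intro jc
          rw [Fin.snoc_castSucc]
          exact hcZ jc
      · have h0 : ell T k ≠ 0 := by
          intro h
          exact hknS (h ▸ Submodule.zero_mem S)
        have hrange : Set.range (Fin.snoc c k : Fin (m+1) → Fin d) =
            insert k (Set.range c) := by
          ext x
          simp only [Set.mem_range, Set.mem_insert_iff]
          constructor
          · rintro ⟨j, rfl⟩
            induction j using Fin.lastCases with
            | last => left; rw [Fin.snoc_last]
            | cast jc => right; exact ⟨jc, by simp⟩
          · rintro (rfl | ⟨j, rfl⟩)
            · exact ⟨Fin.last m, by simp⟩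
            · exact ⟨j.castSucc, by simp⟩
        rw [hrange, Set.image_insert_eq, Submodule.span_insert, ← hS]
        have hsing : Module.finrank ℚ (Submodule.span ℚ {ell T k}) = 1 :=
          finrank_span_singleton h0
        have hsup := Submodule.finrank_sup_add_finrank_inf_eq
          (Submodule.span ℚ {ell T k}) S
        have hlt : S < Submodule.span ℚ {ell T k} ⊔ S := by
          refine lt_of_le_of_ne le_sup_right ?_
          intro h
          apply hknS
          rw [h]
          exact Submodule.mem_sup_left (Submodule.mem_span_singleton_self _)
        have hlt2 := Submodule.finrank_lt_finrank_of_lt hlt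
        omega
  obtain ⟨c, hcZ, hcrk⟩ := claim i le_rfl
  refine ⟨c, hcZ, ?_⟩
  have hle : Submodule.span ℚ (ell T '' Set.range c) ≤ psiSp T A := by
    rw [Submodule.span_le]
    rintro x ⟨j, hj, rfl⟩
    obtain ⟨jj, rfl⟩ := hj
    apply Submodule.subset_span
    exact ⟨c jj, by exact_mod_cast hZA jj jj.isLt (hcZ jj), rfl⟩
  have := Submodule.eq_of_le_of_finrank_le hle (by omega)
  rw [this]

end LinAlg

section CutSplice
variable {n d : ℕ} {T : VASS n d} {tf : Fin n} {y : Fin d → ℕ}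

lemma getLastD_eq_of_getLast? {α : Type*} {L : List α} {e c : α}
    (h : L.getLast? = some e) : L.getLastD c = e := by
  rw [List.getLastD_eq_getLast?, h]
  rfl

lemma covrun_ne_nil {A c0 L} (hL : CovRun T tf y A c0 L) : L ≠ [] := by
  intro h
  have := hL.2.1
  rw [h] at this
  simp at this

lemma covrun_getLast? {A c0 L} (hL : CovRun T tf y A c0 L) :
    L.getLast? = some (L.getLastD c0) := by
  have hne := covrun_ne_nil hL
  rw [List.getLastD_eq_getLast?, List.getLast?_eq_getLast hne]
  rfl

lemma head?_take_succ {α : Type*} (L : List α) (t : ℕ) :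
    (L.take (t+1)).head? = L.head? := by
  cases L with
  | nil => simp
  | cons a l => simp

lemma getLast_eq_getElem_pred {α : Type*} {L : List α} {e : α}
    (h : L.getLast? = some e) (hlen : L.length - 1 < L.length) :
    e = L[L.length - 1] := by
  rw [List.getLast?_eq_getElem?, List.getElem?_eq_getElem hlen] at h
  exact (Option.some.injEq _ _ ▸ h).symm

/-- Cutting a shortest covering run between two positions with equal state and
equal `A`-values is impossible. -/
lemma no_repeat {A : Finset (Fin d)} {c0 : Cfg n d} {L : List (Cfg n d)}
    (hL : CovRun T tf y A c0 L)
    (hmin : ∀ L', CovRun T tf y A c0 L' → L.length ≤ L'.length)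
    {t1 t2 : ℕ} (h12 : t1 < t2) (h2 : t2 < L.length)
    (hst : (L[t1]'(lt_trans h12 h2)).1 = (L[t2]'h2).1)
    (hvals : ∀ k ∈ A, (L[t1]'(lt_trans h12 h2)).2 k = (L[t2]'h2).2 k) : False := by
  have h1 : t1 < L.length := lt_trans h12 h2
  set w : Fin d → ℤ := fun k => (L[t1]'h1).2 k - (L[t2]'h2).2 k with hw
  have hwA : ∀ k ∈ A, w k = 0 := by
    intro k hk
    simp [hw, hvals k hk]
  set L' : List (Cfg n d) := L.take (t1+1) ++ (L.drop (t2+1)).map (shiftC w) with hL'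
  have htake_last : (L.take (t1+1)).getLast? = some (L[t1]'h1) := getLast?_take_succ L t1 h1
  have hshift_eq : shiftC w (L[t2]'h2) = L[t1]'h1 := by
    apply Prod.ext
    · exact hst.symm
    · funext k
      simp [shiftC, hw]
  have hchain : L'.Chain' (StepZ T) := by
    rw [hL']
    refine List.isChain_append.mpr ?_
    refine ⟨List.IsChain.take hL.1 _, List.isChain_map_of_isChain _ (fun a b h => stepZ_shift h) (List.IsChain.drop hL.1 _), ?_⟩
    intro x hx z hz
    rw [htake_last] at hx
    simp only [Option.mem_def, Option.some.injEq] at hx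
    subst hx
    rw [List.head?_map, List.head?_drop] at hz
    simp only [Option.mem_map] at hz
    obtain ⟨z0, hz0, rfl⟩ := hz
    have ht2 : t2 + 1 < L.length := by
      by_contra hcon
      rw [List.getElem?_eq_none (by omega)] at hz0
      simp at hz0
    rw [List.getElem?_eq_getElem ht2] at hz0
    simp only [Option.mem_def, Option.some.injEq] at hz0
    subst hz0
    have := chain'_getElem hL.1 t2 ht2
    have hsh := stepZ_shift (w := w) this
    rw [hshift_eq] at hsh
    exact hsh
  have hhead : L'.head? = some c0 := by
    rw [hL', List.head?_append, head?_take_succ, hL.2.1]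
    rfl
  have hOK : ∀ c ∈ L', OKon A c := by
    intro c hc
    rcases List.mem_append.mp hc with hc | hc
    · exact hL.2.2.1 c (List.take_subset _ _ hc)
    · obtain ⟨c', hc', rfl⟩ := List.mem_map.mp hc
      intro k hk
      have := hL.2.2.1 c' (List.drop_subset _ _ hc') k hk
      simp [shiftC, hwA k hk]
      omega
  set e := L.getLastD c0 with he
  have hLlast : L.getLast? = some e := covrun_getLast? hL
  have hcover : (L'.getLastD c0).1 = tf ∧ ∀ k ∈ A, (y k : ℤ) ≤ (L'.getLastD c0).2 k := by
    rcases Nat.lt_or_ge (t2+1) L.length with hlt | hge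
    · have hdne : L.drop (t2+1) ≠ [] := by
        intro h
        have := congrArg List.length h
        simp at this
        omega
      have hlast' : L'.getLast? = some (shiftC w e) := by
        rw [hL', List.getLast?_append]
        have : ((L.drop (t2+1)).map (shiftC w)).getLast? = some (shiftC w e) := by
          rw [List.getLast?_map, getLast?_drop_of_lt L _ hlt, hLlast]
          rfl
        rw [this]
        rfl
      rw [getLastD_eq_of_getLast? hlast']
      constructor
      · exact hL.2.2.2.1
      · intro k hk
        have hy := hL.2.2.2.2 k hk
        rw [← he] at hy
        simp [shiftC, hwA k hk]
        omega
    · have hdnil : L.drop (t2+1) = [] := List.drop_eq_nil_of_le (by omega)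
      have ht2e : t2 = L.length - 1 := by omega
      have heq : e = L[t2]'h2 := by
        have hl1 : L.length - 1 < L.length := by omega
        have := getLast_eq_getElem_pred hLlast hl1
        subst ht2e
        exact this
      have hlast' : L'.getLast? = some (L[t1]'h1) := by
        rw [hL', hdnil]
        simp only [List.map_nil, List.append_nil]
        exact htake_last
      rw [getLastD_eq_of_getLast? hlast']
      constructor
      · rw [hst, ← heq]
        exact hL.2.2.2.1
      · intro k hk
        rw [hvals k hk, ← heq]
        exact hL.2.2.2.2 k hk
  have hcov' : CovRun T tf y A c0 L' := ⟨hchain, hhead, hOK, hcover.1, hcover.2⟩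
  have hlen : L'.length < L.length := by
    rw [hL']
    rw [List.length_append, List.length_take, List.length_map, List.length_drop]
    omega
  have := hmin L' hcov'
  omega

end CutSplice

section Splice
variable {n d : ℕ} {T : VASS n d} {tf : Fin n} {y : Fin d → ℕ}

lemma natNorm_ge (y : Fin d → ℕ) (k : Fin d) : y k ≤ natNorm y :=
  Finset.le_sup (Finset.mem_univ k)

lemma covrun_suffix {A : Finset (Fin d)} {c0 : Cfg n d} {L : List (Cfg n d)}
    (hL : CovRun T tf y A c0 L) {A' : Finset (Fin d)} (hA' : A' ⊆ A)
    (τ : ℕ) (hτ : τ < L.length) : CovRun T tf y A' (L[τ]'hτ) (L.drop τ) := by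
  have hdne : L.drop τ ≠ [] := by
    intro h
    have := congrArg List.length h
    simp at this
    omega
  have hlast : (L.drop τ).getLast? = some (L.getLastD c0) := by
    rw [getLast?_drop_of_lt L τ hτ]
    exact covrun_getLast? hL
  have hgl : (L.drop τ).getLastD (L[τ]'hτ) = L.getLastD c0 := getLastD_eq_of_getLast? hlast
  refine ⟨List.IsChain.drop hL.1 τ, ?_, ?_, ?_, ?_⟩
  · rw [List.head?_drop, List.getElem?_eq_getElem hτ]
  · intro c hc
    intro k hk
    exact hL.2.2.1 c (List.drop_subset _ _ hc) k (hA' hk)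
  · rw [hgl]
    exact hL.2.2.2.1
  · intro k hk
    rw [hgl]
    exact hL.2.2.2.2 k (hA' hk)

lemma covrun_splice {Mv : ℕ} (hM : vassNorm T = Mv)
    {A : Finset (Fin d)} {c0 : Cfg n d} {L : List (Cfg n d)}
    (hL : CovRun T tf y A c0 L) (τ : ℕ) (hτ : τ < L.length)
    {A' : Finset (Fin d)} (hA' : A' ⊆ A) {Lσ : List (Cfg n d)}
    (hσ : CovRun T tf y A' (L[τ]'hτ) Lσ)
    (hbig : ∀ k ∈ A, k ∉ A' →
      (natNorm y : ℤ) + (Mv : ℤ) * ((Lσ.length : ℤ) - 1) ≤ (L[τ]'hτ).2 k) :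
    ∃ L', CovRun T tf y A c0 L' ∧ L'.length ≤ τ + Lσ.length := by
  have hσne : Lσ ≠ [] := covrun_ne_nil hσ
  have hσcons : (L[τ]'hτ) :: Lσ.tail = Lσ :=
    List.cons_head?_tail (by rw [hσ.2.1]; rfl)
  have hσlen : Lσ.tail.length + 1 = Lσ.length := by
    conv_rhs => rw [← hσcons]
    simp
  have hσchain : ((L[τ]'hτ) :: Lσ.tail).Chain' (StepZ T) := by
    rw [hσcons]; exact hσ.1
  have htail_lb : ∀ c ∈ Lσ.tail, ∀ k,
      (L[τ]'hτ).2 k - (Mv:ℤ) * Lσ.tail.length ≤ c.2 k :=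
    fun c hc k => run_lower_bound hM Lσ.tail (L[τ]'hτ) hσchain c hc k
  have htake_last : (L.take (τ+1)).getLast? = some (L[τ]'hτ) := getLast?_take_succ L τ hτ
  set L' : List (Cfg n d) := L.take (τ+1) ++ Lσ.tail with hL'
  have hchain : L'.Chain' (StepZ T) := by
    refine List.IsChain.append (List.IsChain.take hL.1 _) (List.IsChain.tail hσ.1) ?_
    intro x hx z hz
    rw [htake_last] at hx
    simp only [Option.mem_def, Option.some.injEq] at hx
    subst hx
    exact (List.isChain_cons.mp hσchain).1 z hz
  have hhead : L'.head? = some c0 := by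
    rw [hL', List.head?_append, head?_take_succ, hL.2.1]
    rfl
  have hOK : ∀ c ∈ L', OKon A c := by
    intro c hc
    rcases List.mem_append.mp hc with hc | hc
    · exact hL.2.2.1 c (List.take_subset _ _ hc)
    · intro k hk
      by_cases hk' : k ∈ A'
      · exact hσ.2.2.1 c (List.mem_of_mem_tail hc) k hk'
      · have h1 := htail_lb c hc k
        have h2 := hbig k hk hk'
        have h3 : (0:ℤ) ≤ (natNorm y : ℤ) := by positivity
        have h4 : (Lσ.tail.length : ℤ) = (Lσ.length : ℤ) - 1 := by
          omega
        rw [h4] at h1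
        linarith
  set eσ := Lσ.getLastD (L[τ]'hτ) with heσ
  have hσlast : Lσ.getLast? = some eσ := covrun_getLast? hσ
  have hcov : (L'.getLastD c0).1 = tf ∧ ∀ k ∈ A, (y k : ℤ) ≤ (L'.getLastD c0).2 k := by
    rcases eq_or_ne Lσ.tail [] with htn | htn
    · have hσsing : Lσ = [L[τ]'hτ] := by rw [← hσcons, htn]
      have heq : eσ = L[τ]'hτ := by rw [heσ, hσsing]; rfl
      have hlast' : L'.getLast? = some (L[τ]'hτ) := by
        rw [hL', htn, List.append_nil]
        exact htake_last
      rw [getLastD_eq_of_getLast? hlast', ← heq]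
      refine ⟨hσ.2.2.2.1, ?_⟩
      intro k hk
      by_cases hk' : k ∈ A'
      · exact hσ.2.2.2.2 k hk'
      · have h2 := hbig k hk hk'
        have h3 := natNorm_ge y k
        have h4 : (Lσ.length : ℤ) - 1 = 0 := by
          rw [hσsing]; simp
        rw [heq]
        have : (y k : ℤ) ≤ (natNorm y : ℤ) := by exact_mod_cast h3
        nlinarith [this, h2, h4]
    · have htlt : 1 < Lσ.length := by
        rcases Nat.lt_or_ge 1 Lσ.length with h | h
        · exact h
        · exfalso
          apply htn
          have : Lσ.tail.length = 0 := by omega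
          exact List.eq_nil_of_length_eq_zero this
      have hlast' : L'.getLast? = some eσ := by
        rw [hL', List.getLast?_append]
        have h5 : Lσ.tail.getLast? = some eσ := by
          rw [← List.drop_one, getLast?_drop_of_lt Lσ 1 htlt]
          exact hσlast
        rw [h5]
        rfl
      have heσtail : eσ ∈ Lσ.tail := by
        apply List.mem_of_getLast?
        rw [← List.drop_one, getLast?_drop_of_lt Lσ 1 htlt]
        exact hσlast
      rw [getLastD_eq_of_getLast? hlast']
      refine ⟨hσ.2.2.2.1, ?_⟩
      intro k hk
      by_cases hk' : k ∈ A'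
      · exact hσ.2.2.2.2 k hk'
      · have h1 := htail_lb eσ heσtail k
        have h2 := hbig k hk hk'
        have h3 := natNorm_ge y k
        have h4 : (Lσ.tail.length : ℤ) = (Lσ.length : ℤ) - 1 := by omega
        rw [h4] at h1
        have : (y k : ℤ) ≤ (natNorm y : ℤ) := by exact_mod_cast h3
        linarith
  refine ⟨L', ⟨hchain, hhead, hOK, hcov.1, hcov.2⟩, ?_⟩
  rw [hL', List.length_append, List.length_take]
  omega

end Splice

section Counting
variable {n d : ℕ} {T : VASS n d} {tf : Fin n} {y : Fin d → ℕ}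

lemma prefix_count {A : Finset (Fin d)} {c0 : Cfg n d} {L : List (Cfg n d)}
    (hL : CovRun T tf y A c0 L)
    (hmin : ∀ L', CovRun T tf y A c0 L' → L.length ≤ L'.length)
    (i : ℕ) (hA : Module.finrank ℚ (psiSp T A) ≤ i) (Bv : ℕ → ℕ)
    (τ : ℕ) (hτ : τ ≤ L.length)
    (hev : ∀ t, ∀ ht : t < τ, ∀ j, j < i → j + 1 ≤ Module.finrank ℚ
      (psiSp T (A.filter (fun k => (L[t]'(lt_of_lt_of_le ht hτ)).2 k < (Bv j : ℤ))))) :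
    τ ≤ n * d ^ i * ∏ j ∈ Finset.range i, Bv j := by
  classical
  rcases Nat.eq_zero_or_pos τ with h0 | hpos
  · omega
  have hch : ∀ t, ∀ ht : t < τ, ∃ c : Fin i → Fin d,
      (∀ j : Fin i, c j ∈ A.filter
        (fun k => (L[t]'(lt_of_lt_of_le ht hτ)).2 k < (Bv (j:ℕ) : ℤ))) ∧
      psiSp T A ≤ Submodule.span ℚ (ell T '' Set.range c) := by
    intro t ht
    exact greedy T i A
      (fun j => A.filter (fun k => (L[t]'(lt_of_lt_of_le ht hτ)).2 k < (Bv j : ℤ)))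
      (fun j _ => Finset.filter_subset _ _) (fun j hj => hev t ht j hj) hA
  obtain ⟨cex, _⟩ := hch 0 hpos
  haveI : Nonempty (Fin n × (Fin i → Fin d) × (Fin i → ℕ)) :=
    ⟨(c0.1, cex, fun _ => 0)⟩
  set F : ℕ → Fin n × (Fin i → Fin d) × (Fin i → ℕ) := fun t =>
    if ht : t < τ then
      ((L[t]'(lt_of_lt_of_le ht hτ)).1, (hch t ht).choose,
        fun j => ((L[t]'(lt_of_lt_of_le ht hτ)).2 ((hch t ht).choose j)).toNat)
    else Classical.arbitrary _ with hF
  have hOKL : ∀ t (ht : t < L.length) (k : Fin d), k ∈ A → 0 ≤ (L[t]'ht).2 k := by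
    intro t ht k hk
    exact hL.2.2.1 _ (List.getElem_mem ht) k hk
  have key : ∀ t1 t2, ∀ h1 : t1 < τ, ∀ h2 : t2 < τ, t1 < t2 → F t1 = F t2 → False := by
    intro t1 t2 h1 h2 h12 heq
    have hl1 : t1 < L.length := lt_of_lt_of_le h1 hτ
    have hl2 : t2 < L.length := lt_of_lt_of_le h2 hτ
    rw [hF] at heq
    simp only [dif_pos h1, dif_pos h2] at heq
    injection heq with hstate heq2
    injection heq2 with htup hvalf
    set c := (hch t1 h1).choose with hc
    have hspec1 := (hch t1 h1).choose_spec
    have hspec2 := (hch t2 h2).choose_spec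
    have hvals_c : ∀ j : Fin i, (L[t1]'hl1).2 (c j) = (L[t2]'hl2).2 (c j) := by
      intro j
      have hA1 : c j ∈ A := Finset.mem_of_mem_filter _ (hspec1.1 j)
      have hA2 : c j ∈ A := hA1
      have e1 := hOKL t1 hl1 (c j) hA1
      have e2 := hOKL t2 hl2 (c j) hA2
      have hj := congrFun hvalf j
      rw [← htup] at hj
      omega
    have hmem := diff_mem_cycleSpace hL.1 h12 hl2 hstate
    set δv : cycleSpace T :=
      ⟨toQ (fun k => (L[t2]'hl2).2 k - (L[t1]'hl1).2 k), hmem⟩ with hδv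
    have hkill : ∀ φ ∈ ell T '' Set.range c, φ δv = 0 := by
      rintro φ ⟨k0, ⟨j, rfl⟩, rfl⟩
      show toQ (fun k => (L[t2]'hl2).2 k - (L[t1]'hl1).2 k) (c j) = 0
      simp [toQ, hvals_c j]
    have hallA : ∀ k ∈ A, (L[t1]'hl1).2 k = (L[t2]'hl2).2 k := by
      intro k hk
      have hellk : ell T k ∈ psiSp T A := Submodule.subset_span ⟨k, hk, rfl⟩
      have h0 : ell T k δv = 0 :=
        eval_zero_of_mem_span T hkill (hspec1.2 hellk)
      have : toQ (fun k' => (L[t2]'hl2).2 k' - (L[t1]'hl1).2 k') k = 0 := h0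
      simp only [toQ] at this
      have : (L[t2]'hl2).2 k - (L[t1]'hl1).2 k = 0 := by exact_mod_cast this
      omega
    exact no_repeat hL hmin h12 hl2 hstate hallA
  have hinj : Set.InjOn F (Finset.range τ) := by
    intro t1 ht1 t2 ht2 heq
    simp only [Finset.coe_range, Set.mem_Iio] at ht1 ht2
    rcases lt_trichotomy t1 t2 with h | h | h
    · exact absurd heq (fun he => key t1 t2 ht1 ht2 h he)
    · exact h
    · exact absurd heq.symm (fun he => key t2 t1 ht2 ht1 h he)
  have hmaps : ∀ t ∈ Finset.range τ,
      F t ∈ (Finset.univ : Finset (Fin n)) ×ˢ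
        ((Finset.univ : Finset (Fin i → Fin d)) ×ˢ
          Fintype.piFinset (fun j : Fin i => Finset.range (Bv (j:ℕ)))) := by
    intro t ht
    rw [Finset.mem_range] at ht
    rw [hF]
    simp only [dif_pos ht]
    rw [Finset.mem_product]
    refine ⟨Finset.mem_univ _, ?_⟩
    rw [Finset.mem_product]
    refine ⟨Finset.mem_univ _, ?_⟩
    rw [Fintype.mem_piFinset]
    intro j
    rw [Finset.mem_range]
    show ((L[t]'(lt_of_lt_of_le ht hτ)).2 ((hch t ht).choose j)).toNat < Bv (j:ℕ)
    have hspec := (hch t ht).choose_spec.1 j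
    rw [Finset.mem_filter] at hspec
    have hnn := hOKL t (lt_of_lt_of_le ht hτ) _ hspec.1
    have hlt := hspec.2
    omega
  have hcard := Finset.card_le_card_of_injOn F hmaps hinj
  rw [Finset.card_range] at hcard
  rw [Finset.card_product, Finset.card_product, Fintype.card_piFinset] at hcard
  simp only [Finset.card_univ, Fintype.card_fin, Fintype.card_fun, Finset.card_range] at hcard
  calc τ ≤ n * (d ^ i * ∏ j : Fin i, Bv (j:ℕ)) := hcard
    _ = n * d ^ i * ∏ j ∈ Finset.range i, Bv j := by
        rw [Fin.prod_univ_eq_prod_range (fun j => Bv j) i]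
        ring

end Counting

section MainInduction
variable {n d : ℕ} {T : VASS n d} {tf : Fin n} {y : Fin d → ℕ}

lemma main_induction {Mv : ℕ} (hM : vassNorm T = Mv) (K : ℕ → ℕ) (hK0 : K 0 = n - 1)
    (hKs : ∀ i, K (i + 1) =
      n * d ^ (i + 1) * (∏ j ∈ Finset.range (i + 1), (natNorm y + Mv * K j)) + K i) :
    ∀ i (A : Finset (Fin d)) (c0 : Cfg n d),
      Module.finrank ℚ (psiSp T A) ≤ i →
      (∃ L, CovRun T tf y A c0 L) →
      ∃ L, CovRun T tf y A c0 L ∧ L.length ≤ K i + 1 := by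
  classical
  have hKmono : Monotone K := monotone_nat_of_le_succ (fun i => by rw [hKs i]; omega)
  intro i
  induction i using Nat.strong_induction_on with
  | _ i IH =>
    intro A c0 hA hex
    have hnpos : 0 < n := c0.1.pos
    -- a run of minimal length
    have hPex : ∃ m, ∃ L, CovRun T tf y A c0 L ∧ L.length = m := by
      obtain ⟨L, hL⟩ := hex
      exact ⟨L.length, L, hL, rfl⟩
    obtain ⟨L, hL, hLlen⟩ := Nat.find_spec hPex
    have hmin : ∀ L', CovRun T tf y A c0 L' → L.length ≤ L'.length := by
      intro L' h'
      rw [hLlen]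
      exact Nat.find_min' hPex ⟨L', h', rfl⟩
    set EvP : ℕ → Prop := fun t => ∃ ht : t < L.length, ∃ j, j < i ∧
      Module.finrank ℚ (psiSp T
        (A.filter (fun k => (L[t]'ht).2 k < ((natNorm y + Mv * K j : ℕ) : ℤ)))) ≤ j with hEvP
    by_cases hEv : ∃ t, EvP t
    · -- case A : an event happens; τ is the first event time
      set τ := Nat.find hEv with hτdef
      obtain ⟨hτlen, j, hji, hjrk⟩ := Nat.find_spec hEv
      have hno : ∀ t, t < τ → ¬ EvP t := fun t ht => Nat.find_min hEv ht
      have hipos : 0 < i := by omega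
      have hτN : τ ≤ n * d ^ i * ∏ j ∈ Finset.range i, (natNorm y + Mv * K j) := by
        apply prefix_count hL hmin i hA (fun j => natNorm y + Mv * K j) τ (le_of_lt hτlen)
        intro t ht j' hj'
        have hnt := hno t ht
        simp only [hEvP] at hnt
        push_neg at hnt
        have := hnt (lt_of_lt_of_le ht (le_of_lt hτlen)) j' hj'
        omega
      set A' := A.filter (fun k => (L[τ]'hτlen).2 k < ((natNorm y + Mv * K j : ℕ) : ℤ)) with hA'
      have hsuf : CovRun T tf y A' (L[τ]'hτlen) (L.drop τ) :=
        covrun_suffix hL (Finset.filter_subset _ _) τ hτlen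
      obtain ⟨Lσ, hLσ, hσlen⟩ := IH j hji A' (L[τ]'hτlen) hjrk ⟨_, hsuf⟩
      have hbig : ∀ k ∈ A, k ∉ A' →
          (natNorm y : ℤ) + (Mv : ℤ) * ((Lσ.length : ℤ) - 1) ≤ (L[τ]'hτlen).2 k := by
        intro k hk hk'
        have hval : ¬ ((L[τ]'hτlen).2 k < ((natNorm y + Mv * K j : ℕ) : ℤ)) := by
          intro hcon
          exact hk' (Finset.mem_filter.mpr ⟨hk, hcon⟩)
        push_neg at hval
        have h1 : ((Lσ.length : ℤ) - 1) ≤ (K j : ℤ) := by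
          have := hσlen
          have hpos : 0 < Lσ.length := List.length_pos_iff.mpr (covrun_ne_nil hLσ)
          omega
        have h2 : (Mv:ℤ) * ((Lσ.length : ℤ) - 1) ≤ (Mv:ℤ) * (K j : ℤ) :=
          mul_le_mul_of_nonneg_left h1 (by positivity)
        have h3 : ((natNorm y + Mv * K j : ℕ) : ℤ) = (natNorm y : ℤ) + (Mv:ℤ) * (K j : ℤ) := by
          push_cast
          ring
        omega
      obtain ⟨L', hL', hlen'⟩ :=
        covrun_splice hM hL τ hτlen (Finset.filter_subset _ _) hLσ hbig
      refine ⟨L, hL, ?_⟩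
      obtain ⟨i', rfl⟩ : ∃ i', i = i' + 1 := ⟨i - 1, by omega⟩
      have hKj : K j ≤ K i' := hKmono (by omega)
      have hm := hmin L' hL'
      have hKi := hKs i'
      omega
    · -- case B : no event ever
      push_neg at hEv
      have hLN : L.length ≤ n * d ^ i * ∏ j ∈ Finset.range i, (natNorm y + Mv * K j) := by
        apply prefix_count hL hmin i hA (fun j => natNorm y + Mv * K j) L.length le_rfl
        intro t ht j' hj'
        have hnt := hEv t
        simp only [hEvP] at hnt
        push_neg at hnt
        have := hnt (lt_of_lt_of_le ht le_rfl) j' hj'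
        omega
      refine ⟨L, hL, ?_⟩
      cases i with
      | zero =>
        simp at hLN
        omega
      | succ i' =>
        have hKi := hKs i'
        omega

end MainInduction

section Glue
variable {n d : ℕ} {T : VASS n d}

def toZc {n d : ℕ} (c : Fin n × (Fin d → ℕ)) : Cfg n d := (c.1, fun k => (c.2 k : ℤ))
def toNc {n d : ℕ} (c : Cfg n d) : Fin n × (Fin d → ℕ) := (c.1, fun k => (c.2 k).toNat)

lemma chainZ_of_chainN : ∀ (c : Fin n × (Fin d → ℕ)) (cs : List (Fin n × (Fin d → ℕ))),
    List.Chain (Step T) c cs → ((c :: cs).map toZc).Chain' (StepZ T) := by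
  intro c cs
  induction cs generalizing c with
  | nil => intro _; exact List.IsChain.singleton _
  | cons c' cs' ih =>
    intro h
    rcases List.isChain_cons_cons.mp h with ⟨hstep, hchain⟩
    rw [List.map_cons]
    rw [List.map_cons] at *
    refine List.isChain_cons_cons.mpr ⟨?_, ih c' hchain⟩
    obtain ⟨a, haT, hav⟩ := hstep
    exact ⟨a, haT, fun k => by simpa [toZc] using hav k⟩

lemma chainN_of_chainZ : ∀ (c : Cfg n d) (cs : List (Cfg n d)),
    ((c :: cs)).Chain' (StepZ T) → (∀ x ∈ c :: cs, OKon Finset.univ x) →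
    List.Chain (Step T) (toNc c) (cs.map toNc) := by
  intro c cs
  induction cs generalizing c with
  | nil => intro _ _; exact List.IsChain.singleton _
  | cons c' cs' ih =>
    intro h hOK
    have h1 : StepZ T c c' := (List.isChain_cons_cons.mp h).1
    have h2 := (List.isChain_cons_cons.mp h).2
    rw [List.map_cons]
    refine List.Chain.cons ?_ (ih c' h2 (fun x hx => hOK x (List.mem_cons_of_mem _ hx)))
    obtain ⟨a, haT, hav⟩ := h1
    refine ⟨a, haT, fun k => ?_⟩
    have hc : 0 ≤ c.2 k := hOK c (List.mem_cons_self) k (Finset.mem_univ k)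
    have hc' : 0 ≤ c'.2 k := hOK c' (List.mem_cons_of_mem _ (List.mem_cons_self)) k (Finset.mem_univ k)
    show ((c'.2 k).toNat : ℤ) = ((c.2 k).toNat : ℤ) + a k
    rw [Int.toNat_of_nonneg hc', Int.toNat_of_nonneg hc]
    exact hav k

lemma getLastD_map_head {α β : Type*} (f : α → β) (c : α) (cs : List α) :
    ((c :: cs).map f).getLastD (f c) = f ((c :: cs).getLast (List.cons_ne_nil c cs)) := by
  apply getLastD_eq_of_getLast?
  rw [List.getLast?_map, List.getLast?_eq_getLast (List.cons_ne_nil c cs)]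
  rfl

end Glue


/-- Improved coverability bound in the geometric dimension: if some run from s(x)
covers t(y), there is a covering run of length at most K_g where K_0 = n − 1 and
K_i = n·d^i·∏_{j<i}(‖y‖∞ + M·K_j) + K_{i−1}. -/
theorem cover_length_le_K {n d g M : ℕ} (T : VASS n d)
    (hg : geomDim T = g) (hM : vassNorm T = M)
    (s t : Fin n) (x y : Fin d → ℕ)
    (K : ℕ → ℕ) (hK0 : K 0 = n - 1)
    (hKs : ∀ i, K (i + 1) =
      n * d ^ (i + 1) * (∏ j ∈ Finset.range (i + 1), (natNorm y + M * K j)) + K i)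
    (hcov : ∃ cs, IsRunFrom T (s, x) cs ∧
      (runEnd (s, x) cs).1 = t ∧ y ≤ (runEnd (s, x) cs).2) :
    ∃ cs, IsRunFrom T (s, x) cs ∧
      (runEnd (s, x) cs).1 = t ∧ y ≤ (runEnd (s, x) cs).2 ∧ cs.length ≤ K g := by
  classical
  obtain ⟨cs, hrun, hstate, hvals⟩ := hcov
  -- forward conversion
  set c0 : Cfg n d := toZc (s, x) with hc0
  have hfwd : CovRun T t y Finset.univ c0 (((s, x) :: cs).map toZc) := by
    have hgl := getLastD_map_head (toZc (n := n) (d := d)) (s, x) cs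
    have hgl' : (((s, x) :: cs).map toZc).getLastD c0 = toZc (runEnd (s, x) cs) := by
      rw [hc0]
      show (((s, x) :: cs).map toZc).getLastD (toZc (s, x)) = _
      rw [getLastD_map_head (toZc (n := n) (d := d)) (s, x) cs]
      rfl
    refine ⟨chainZ_of_chainN (s, x) cs hrun, by simp [hc0], ?_, ?_, ?_⟩
    · intro c hc
      obtain ⟨c', _, rfl⟩ := List.mem_map.mp hc
      intro k _
      exact Int.natCast_nonneg _
    · rw [hgl']
      exact hstate
    · intro k _
      rw [hgl']
      show (y k : ℤ) ≤ ((runEnd (s, x) cs).2 k : ℤ)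
      exact_mod_cast hvals k
  have hpsi : Module.finrank ℚ (psiSp T Finset.univ) ≤ g := by
    have := finrank_psi_univ_le T
    omega
  obtain ⟨L, hL, hlen⟩ :=
    main_induction hM K hK0 hKs g Finset.univ c0 hpsi ⟨_, hfwd⟩
  -- backward conversion
  have hcons : c0 :: L.tail = L := List.cons_head?_tail (by rw [hL.2.1]; rfl)
  have hOKall : ∀ x' ∈ c0 :: L.tail, OKon Finset.univ x' := by
    rw [hcons]
    exact hL.2.2.1
  have hchainL : (c0 :: L.tail).Chain' (StepZ T) := by
    rw [hcons]
    exact hL.1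
  have hN0 : toNc c0 = (s, x) := by
    rw [hc0]
    apply Prod.ext
    · rfl
    · funext k
      show ((x k : ℤ)).toNat = x k
      exact Int.toNat_natCast _
  set cs' := L.tail.map toNc with hcs'
  have hrun' : IsRunFrom T (s, x) cs' := by
    rw [← hN0]
    exact chainN_of_chainZ c0 L.tail hchainL hOKall
  set e := L.getLastD c0 with he
  have hemem : e ∈ L := List.mem_of_getLast? (covrun_getLast? hL)
  have hOKe : OKon Finset.univ e := hL.2.2.1 e hemem
  have hrunEnd : runEnd (s, x) cs' = toNc e := by
    have hlist : (s, x) :: cs' = L.map toNc := by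
      rw [hcs', ← hN0, ← List.map_cons, hcons]
    have h1 : ((s, x) :: cs').getLast? = some (runEnd (s, x) cs') :=
      List.getLast?_eq_getLast (List.cons_ne_nil _ _)
    have h2 : (L.map toNc).getLast? = some (toNc e) := by
      rw [List.getLast?_map, covrun_getLast? hL, ← he]
      rfl
    rw [hlist, h2] at h1
    exact (Option.some.injEq _ _ ▸ h1.symm)
  refine ⟨cs', hrun', ?_, ?_, ?_⟩
  · rw [hrunEnd]
    exact hL.2.2.2.1
  · rw [hrunEnd]
    intro k
    have hy := hL.2.2.2.2 k (Finset.mem_univ k)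
    rw [← he] at hy
    have hnn := hOKe k (Finset.mem_univ k)
    show y k ≤ (e.2 k).toNat
    omega
  · have hLne : L ≠ [] := covrun_ne_nil hL
    have : L.tail.length + 1 = L.length := by
      conv_rhs => rw [← hcons]
      simp
    rw [hcs', List.length_map]
    omega
end
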